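/- arXiv:1702.07930 — 2 statements merged into one kernel-verified Lean document; each statement's English description precedes it below -/
import Mathlib

section
/- (Corollary 2) Assume X⋄ ∩ int C ≠ ∅. Let d ≥ 1 be the dimension of the real subspace Re(R(Ψ)) = {Re(Ψ w) : w ∈ ℂ^{p'}}, and let Ψ = F Z where F is a real p × d matrix of rank d and Z is a complex d × p' matrix whose real d × 2p' matrix [Re Z Im Z] has rank d; set F⁺ = (Fᵀ F)⁻¹ Fᵀ and Z^‡ = Z^H (Re(Z Z^H))⁻¹. Then for any x⋄ ∈ X⋄ ∩ int C, U = inf_{t ∈ ℂ^{p'}} ‖t + Z^‡ (F⁺ ∇L(x⋄) − Re(Z t))‖_∞, and in particular U is finite. -/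
open Matrix
open scoped RealInnerProductSpace ENNReal

noncomputable section

def cnorm1 {n : ℕ} (z : Fin n → ℂ) : ℝ := ∑ j, ‖z j‖

noncomputable def cnormInf {n : ℕ} (z : Fin n → ℂ) : ℝ := ⨆ j, ‖z j‖

def psiH {p p' : ℕ} (Ψ : Matrix (Fin p) (Fin p') ℂ) (x : EuclideanSpace ℝ (Fin p)) :
    Fin p' → ℂ :=
  Matrix.mulVec Ψᴴ fun i => (x i : ℂ)

def rePsi {p p' : ℕ} (Ψ : Matrix (Fin p) (Fin p') ℂ) (w : Fin p' → ℂ) :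
    EuclideanSpace ℝ (Fin p) :=
  WithLp.toLp 2 (fun i => (Matrix.mulVec Ψ w i).re)

def Gset {n : ℕ} (s : Fin n → ℂ) : Set (Fin n → ℂ) :=
  {w | ∀ j, ‖w j‖ ≤ 1 ∧ (s j ≠ 0 → w j = s j / ((‖s j‖ : ℝ) : ℂ))}

def normalCone {p : ℕ} (C : Set (EuclideanSpace ℝ (Fin p))) (x : EuclideanSpace ℝ (Fin p)) :
    Set (EuclideanSpace ℝ (Fin p)) :=
  {a | ∀ y ∈ C, ⟪a, y - x⟫ ≤ 0}

def XuSet {p p' : ℕ} (C : Set (EuclideanSpace ℝ (Fin p))) (L : EuclideanSpace ℝ (Fin p) → ℝ)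
    (Ψ : Matrix (Fin p) (Fin p') ℂ) (u : ℝ) : Set (EuclideanSpace ℝ (Fin p)) :=
  {x ∈ C | ∀ χ ∈ C, L x + u * cnorm1 (psiH Ψ x) ≤ L χ + u * cnorm1 (psiH Ψ χ)}

def QSet {p p' : ℕ} (C : Set (EuclideanSpace ℝ (Fin p))) (Ψ : Matrix (Fin p) (Fin p') ℂ) :
    Set (EuclideanSpace ℝ (Fin p)) :=
  {x ∈ C | ∀ χ ∈ C, cnorm1 (psiH Ψ x) ≤ cnorm1 (psiH Ψ χ)}

def XdSet {p p' : ℕ} (C : Set (EuclideanSpace ℝ (Fin p))) (L : EuclideanSpace ℝ (Fin p) → ℝ)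
    (Ψ : Matrix (Fin p) (Fin p') ℂ) : Set (EuclideanSpace ℝ (Fin p)) :=
  {x ∈ QSet C Ψ | ∀ χ ∈ QSet C Ψ, L x ≤ L χ}

def Ubound {p p' : ℕ} (C : Set (EuclideanSpace ℝ (Fin p))) (L : EuclideanSpace ℝ (Fin p) → ℝ)
    (Ψ : Matrix (Fin p) (Fin p') ℂ) : ℝ≥0∞ :=
  sInf (ENNReal.ofReal '' {u : ℝ | 0 ≤ u ∧ (XuSet C L Ψ u ∩ QSet C Ψ).Nonempty})


/-- `F⁺ = (Fᵀ F)⁻¹ Fᵀ`, the Moore–Penrose inverse of a full-column-rank real matrix. -/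
def Fpinv {p d : ℕ} (F : Matrix (Fin p) (Fin d) ℝ) : Matrix (Fin d) (Fin p) ℝ :=
  (Fᵀ * F)⁻¹ * Fᵀ

/-- `Z^‡ = Zᴴ (Re (Z Zᴴ))⁻¹`. -/
def Zddag {d p' : ℕ} (Z : Matrix (Fin d) (Fin p') ℂ) : Matrix (Fin p') (Fin d) ℂ :=
  Zᴴ * (((Z * Zᴴ).map Complex.re)⁻¹.map Complex.ofReal)


/-! ### Auxiliary lemmas -/

section Aux

lemma isUnit_of_rank_eq {d : ℕ} (A : Matrix (Fin d) (Fin d) ℝ) (h : A.rank = d) : IsUnit A := by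
  rw [← Matrix.mulVec_surjective_iff_isUnit]
  have : LinearMap.range A.mulVecLin = ⊤ := by
    apply Submodule.eq_top_of_finrank_eq
    rw [← Matrix.rank, h]
    simp [Module.finrank_pi]
  exact fun y => LinearMap.range_eq_top.mp this y

lemma re_mulVec_real {m n : Type*} [Fintype n] (A : Matrix m n ℂ) (y : n → ℝ) (k : m) :
    (A.mulVec (fun j => (y j : ℂ)) k).re = (A.map Complex.re).mulVec y k := by
  simp only [Matrix.mulVec, dotProduct, Matrix.map_apply, Complex.re_sum]
  congr 1; ext j
  simp [Complex.mul_re]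

lemma map_ofReal_mulVec {m n : Type*} [Fintype n] (B : Matrix m n ℝ) (y : n → ℝ) :
    (B.map (Complex.ofReal)).mulVec (fun j => (y j : ℂ)) = fun k => ((B.mulVec y k : ℝ) : ℂ) := by
  funext k
  simp only [Matrix.mulVec, dotProduct, Matrix.map_apply]
  push_cast
  rfl

lemma reZZH_eq {d p' : ℕ} (Z : Matrix (Fin d) (Fin p') ℂ) :
    (Z * Zᴴ).map Complex.re
      = Matrix.fromCols (Z.map Complex.re) (Z.map Complex.im)
        * (Matrix.fromCols (Z.map Complex.re) (Z.map Complex.im))ᵀ := by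
  rw [Matrix.transpose_fromCols, Matrix.fromCols_mul_fromRows]
  ext j k
  simp only [Matrix.map_apply, Matrix.mul_apply, Matrix.add_apply, Matrix.transpose_apply,
    Complex.re_sum]
  rw [← Finset.sum_add_distrib]
  congr 1; ext l
  simp [Complex.mul_re, Matrix.conjTranspose_apply, mul_comm]

lemma isUnit_reZZH {d p' : ℕ} (Z : Matrix (Fin d) (Fin p') ℂ)
    (hZ : (Matrix.fromCols (Z.map Complex.re) (Z.map Complex.im)).rank = d) :
    IsUnit ((Z * Zᴴ).map Complex.re) := by
  apply isUnit_of_rank_eq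
  rw [reZZH_eq, Matrix.rank_self_mul_transpose, hZ]

lemma cnorm1_nonneg {n : ℕ} (z : Fin n → ℂ) : 0 ≤ cnorm1 z :=
  Finset.sum_nonneg fun j _ => norm_nonneg _

lemma abs_le_cnormInf {n : ℕ} (z : Fin n → ℂ) (j : Fin n) : ‖z j‖ ≤ cnormInf z :=
  le_ciSup (f := fun j => ‖z j‖) (Set.Finite.bddAbove (Set.finite_range _)) j

lemma cnormInf_nonneg {n : ℕ} (hn : 0 < n) (z : Fin n → ℂ) : 0 ≤ cnormInf z :=
  le_trans (norm_nonneg (z ⟨0, hn⟩)) (abs_le_cnormInf z ⟨0, hn⟩)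

lemma cnormInf_le {n : ℕ} (z : Fin n → ℂ) (u : ℝ) (hn : 0 < n) (h : ∀ j, ‖z j‖ ≤ u) :
    cnormInf z ≤ u := by
  have : Nonempty (Fin n) := ⟨⟨0, hn⟩⟩
  exact ciSup_le h

lemma psiH_add {p p' : ℕ} (Ψ : Matrix (Fin p) (Fin p') ℂ) (x y : EuclideanSpace ℝ (Fin p)) :
    psiH Ψ (x + y) = psiH Ψ x + psiH Ψ y := by
  unfold psiH
  rw [show (fun i => ((x + y) i : ℂ)) = (fun i => (x i : ℂ)) + (fun i => (y i : ℂ)) by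
    funext i; simp [PiLp.add_apply]]
  exact Matrix.mulVec_add _ _ _

lemma psiH_smul {p p' : ℕ} (Ψ : Matrix (Fin p) (Fin p') ℂ) (r : ℝ) (x : EuclideanSpace ℝ (Fin p)) :
    psiH Ψ (r • x) = fun j => (r : ℂ) * psiH Ψ x j := by
  unfold psiH
  rw [show (fun i => ((r • x) i : ℂ)) = (r : ℂ) • (fun i => (x i : ℂ)) by
    funext i; simp [PiLp.smul_apply]]
  funext j
  rw [Matrix.mulVec_smul]
  simp

end Aux
section Aux2

lemma cnorm1_scale {n : ℕ} (r : ℝ) (z : Fin n → ℂ) :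
    cnorm1 (fun j => (r : ℂ) * z j) = |r| * cnorm1 z := by
  unfold cnorm1
  rw [Finset.mul_sum]
  congr 1; ext j
  simp [norm_mul, Complex.norm_real]

lemma inner_rePsi_eq {p p' : ℕ} (Ψ : Matrix (Fin p) (Fin p') ℂ) (w : Fin p' → ℂ)
    (v : EuclideanSpace ℝ (Fin p)) :
    ⟪rePsi Ψ w, v⟫ = (∑ j, w j * (starRingEnd ℂ) (psiH Ψ v j)).re := by
  rw [PiLp.inner_apply]
  unfold rePsi psiH
  simp only [RCLike.inner_apply', starRingEnd_apply, star_trivial, PiLp.toLp_apply]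
  have : ∀ i : Fin p, (Ψ.mulVec w i).re * v i = (Ψ.mulVec w i * (v i : ℂ)).re := by
    intro i; simp [Complex.mul_re]
  simp only [this, ← Complex.re_sum]
  congr 1
  simp only [Matrix.mulVec, dotProduct, Matrix.conjTranspose_apply, Finset.sum_mul,
    map_sum, _root_.map_mul, Complex.conj_conj, Finset.mul_sum]
  rw [Finset.sum_comm]
  congr 1; funext i
  rw [star_sum, Finset.mul_sum]
  congr 1; funext x
  simp only [Complex.star_def, _root_.map_mul, Complex.conj_conj, Complex.conj_ofReal]
  ring

lemma weak_duality {p p' : ℕ} (hp' : 0 < p') (Ψ : Matrix (Fin p) (Fin p') ℂ) (w : Fin p' → ℂ)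
    (v : EuclideanSpace ℝ (Fin p)) :
    ⟪rePsi Ψ w, v⟫ ≤ cnormInf w * cnorm1 (psiH Ψ v) := by
  rw [inner_rePsi_eq]
  calc (∑ j, w j * (starRingEnd ℂ) (psiH Ψ v j)).re
      ≤ ‖∑ j, w j * (starRingEnd ℂ) (psiH Ψ v j)‖ := Complex.re_le_norm _
    _ ≤ ∑ j, ‖w j * (starRingEnd ℂ) (psiH Ψ v j)‖ := by
        exact norm_sum_le _ _
    _ ≤ ∑ j, cnormInf w * ‖psiH Ψ v j‖ := by
        apply Finset.sum_le_sum
        intro j _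
        rw [norm_mul, Complex.norm_conj]
        exact mul_le_mul_of_nonneg_right (abs_le_cnormInf w j) (norm_nonneg _)
    _ = cnormInf w * cnorm1 (psiH Ψ v) := by rw [cnorm1, Finset.mul_sum]

/-- `rePsi` as a real-linear map. -/
def rePsiL {p p' : ℕ} (Ψ : Matrix (Fin p) (Fin p') ℂ) :
    (Fin p' → ℂ) →ₗ[ℝ] EuclideanSpace ℝ (Fin p) where
  toFun := rePsi Ψ
  map_add' w₁ w₂ := by
    ext i
    simp [rePsi, Matrix.mulVec_add, PiLp.add_apply]
  map_smul' r w := by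
    ext i
    simp only [rePsi, RingHom.id_apply, PiLp.smul_apply, smul_eq_mul]
    rw [show r • w = (r : ℂ) • w by funext j; simp [Complex.real_smul]]
    rw [Matrix.mulVec_smul]
    simp

end Aux2
section Sep

open Set

lemma sep_exists {p p' : ℕ} (hp' : 0 < p') (Ψ : Matrix (Fin p) (Fin p') ℂ)
    (g : EuclideanSpace ℝ (Fin p)) (u : ℝ) (hu : 0 ≤ u)
    (hcond : ∀ v : EuclideanSpace ℝ (Fin p), ⟪g, v⟫ ≤ u * cnorm1 (psiH Ψ v)) :
    ∃ w : Fin p' → ℂ, (∀ j, ‖w j‖ ≤ u) ∧ rePsi Ψ w = g := by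
  classical
  set B : Set (Fin p' → ℂ) := Set.univ.pi (fun _ => Metric.closedBall (0 : ℂ) u) with hB
  have hBmem : ∀ w : Fin p' → ℂ, w ∈ B ↔ ∀ j, ‖w j‖ ≤ u := by
    intro w
    simp [hB, Set.mem_pi, Metric.mem_closedBall, Complex.dist_eq]
  have hBcv : Convex ℝ B := by
    apply convex_pi
    intro j _
    exact convex_closedBall _ _
  have hBcp : IsCompact B := isCompact_univ_pi (fun _ => isCompact_closedBall _ _)
  set A : Set (EuclideanSpace ℝ (Fin p)) := (rePsiL Ψ) '' B with hA
  have hAcv : Convex ℝ A := hBcv.linear_image (rePsiL Ψ)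
  have hAcp : IsCompact A := hBcp.image (rePsiL Ψ).continuous_of_finiteDimensional
  by_contra hno
  push_neg at hno
  have hgA : g ∉ A := by
    intro hg
    obtain ⟨w, hwB, hwg⟩ := hg
    exact hno w ((hBmem w).mp hwB) hwg
  obtain ⟨f, c, hfa, hfc⟩ := geometric_hahn_banach_closed_point hAcv hAcp.isClosed hgA
  set v : EuclideanSpace ℝ (Fin p) := (InnerProductSpace.toDual ℝ _).symm f with hv
  have hfv : ∀ y, f y = ⟪v, y⟫ := by
    intro y
    rw [hv]
    simp [InnerProductSpace.toDual_apply_apply]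
  -- the maximizing w*
  set s : Fin p' → ℂ := psiH Ψ v with hs
  set ws : Fin p' → ℂ := fun j => (u : ℂ) * s j / ((‖s j‖ : ℝ) : ℂ) with hws
  have hwsB : ws ∈ B := by
    rw [hBmem]
    intro j
    rw [hws]
    simp only [norm_div, norm_mul, Complex.norm_real, Real.norm_eq_abs, abs_norm]
    rcases eq_or_ne (s j) 0 with h0 | h0
    · simp [h0, hu]
    · rw [abs_of_nonneg hu, mul_div_assoc, div_self (by simpa using h0)]
      simp [hu]
  have hval : ⟪rePsi Ψ ws, v⟫ = u * cnorm1 s := by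
    rw [inner_rePsi_eq, ← hs]
    have : ∀ j, ws j * (starRingEnd ℂ) (s j) = ((u * ‖s j‖ : ℝ) : ℂ) := by
      intro j
      rcases eq_or_ne (s j) 0 with h0 | h0
      · simp [hws, h0]
      · rw [hws]
        have habs : ((‖s j‖ : ℝ) : ℂ) ≠ 0 := by simpa using h0
        field_simp
        rw [mul_assoc, Complex.mul_conj, Complex.normSq_eq_norm_sq]
        push_cast
        ring
    simp only [this]
    rw [← Complex.ofReal_sum]
    simp [cnorm1, Finset.mul_sum]
  have h1 : ⟪rePsi Ψ ws, v⟫ < c := by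
    have h := hfa _ ⟨ws, hwsB, rfl⟩
    rw [hfv] at h
    rw [real_inner_comm]
    exact h
  have h2 : c < ⟪v, g⟫ := by
    have h := hfc
    rwa [hfv] at h
  have h3 : ⟪g, v⟫ ≤ u * cnorm1 s := hcond v
  rw [real_inner_comm] at h3
  rw [hval] at h1
  linarith

end Sep
section Calc

open Filter Topology

lemma hasDerivAt_line {p : ℕ} {L : EuclideanSpace ℝ (Fin p) → ℝ}
    {g x : EuclideanSpace ℝ (Fin p)} (hg : HasGradientAt L g x)
    (v : EuclideanSpace ℝ (Fin p)) :
    HasDerivAt (fun ε : ℝ => L (x + ε • v)) ⟪g, v⟫ 0 := by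
  have hc : HasDerivAt (fun ε : ℝ => x + ε • v) v 0 := by
    simpa using ((hasDerivAt_id (0 : ℝ)).smul_const v).const_add x
  have hf : HasFDerivAt L (InnerProductSpace.toDual ℝ _ g) ((fun ε : ℝ => x + ε • v) 0) := by
    simpa using hasGradientAt_iff_hasFDerivAt.mp hg
  have := hf.comp_hasDerivAt (0 : ℝ) hc
  exact this

lemma ge_of_slope {φ : ℝ → ℝ} {D c : ℝ} (h : HasDerivAt φ D 0)
    (hb : ∀ᶠ ε in 𝓝[>] (0 : ℝ), c ≤ (φ ε - φ 0) / ε) : c ≤ D := by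
  have ht : Filter.Tendsto (slope φ 0) (𝓝[>] 0) (𝓝 D) :=
    (hasDerivAt_iff_tendsto_slope.mp h).mono_left
      (nhdsWithin_mono 0 (fun y hy => ne_of_gt hy))
  refine ge_of_tendsto ht ?_
  filter_upwards [hb] with ε hε
  simpa [slope_def_field, sub_zero] using hε

lemma le_of_slope {φ : ℝ → ℝ} {D c : ℝ} (h : HasDerivAt φ D 0)
    (hb : ∀ᶠ ε in 𝓝[>] (0 : ℝ), (φ ε - φ 0) / ε ≤ c) : D ≤ c := by
  have ht : Filter.Tendsto (slope φ 0) (𝓝[>] 0) (𝓝 D) :=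
    (hasDerivAt_iff_tendsto_slope.mp h).mono_left
      (nhdsWithin_mono 0 (fun y hy => ne_of_gt hy))
  refine le_of_tendsto ht ?_
  filter_upwards [hb] with ε hε
  simpa [slope_def_field, sub_zero] using hε

lemma gradient_ineq {p : ℕ} {L : EuclideanSpace ℝ (Fin p) → ℝ}
    (hLcv : ConvexOn ℝ Set.univ L) {g x : EuclideanSpace ℝ (Fin p)}
    (hg : HasGradientAt L g x) (y : EuclideanSpace ℝ (Fin p)) :
    L x + ⟪g, y - x⟫ ≤ L y := by
  have key : ⟪g, y - x⟫ ≤ L y - L x := by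
    apply le_of_slope (hasDerivAt_line hg (y - x))
    filter_upwards [Ioo_mem_nhdsGT (zero_lt_one)] with ε hε
    obtain ⟨hε0, hε1⟩ := hε
    have hcv := hLcv.2 (Set.mem_univ x) (Set.mem_univ y)
      (show (0:ℝ) ≤ 1 - ε by linarith) (le_of_lt hε0) (show (1 - ε) + ε = 1 by ring)
    have hxy : x + ε • (y - x) = (1 - ε) • x + ε • y := by module
    rw [div_le_iff₀ hε0]
    have : L (x + ε • (y - x)) ≤ (1 - ε) * L x + ε * L y := by
      rw [hxy]; simpa [smul_eq_mul] using hcv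
    simp only [smul_eq_mul, zero_smul, add_zero]
    nlinarith [this]
  linarith

end Calc
section Aux3

lemma cnorm1_zero {n : ℕ} : cnorm1 (0 : Fin n → ℂ) = 0 := by simp [cnorm1]

lemma cnorm1_neg {n : ℕ} (z : Fin n → ℂ) : cnorm1 (-z) = cnorm1 z := by
  simp [cnorm1]

lemma eq_zero_of_cnorm1_nonpos {n : ℕ} {z : Fin n → ℂ} (h : cnorm1 z ≤ 0) : z = 0 := by
  have h' : cnorm1 z = 0 := le_antisymm h (cnorm1_nonneg z)
  funext j
  have := (Finset.sum_eq_zero_iff_of_nonneg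
    (fun j _ => norm_nonneg (z j))).mp h' j (Finset.mem_univ j)
  simpa using this

lemma psiH_sub {p p' : ℕ} (Ψ : Matrix (Fin p) (Fin p') ℂ) (x y : EuclideanSpace ℝ (Fin p)) :
    psiH Ψ (x - y) = psiH Ψ x - psiH Ψ y := by
  unfold psiH
  rw [show (fun i => ((x - y) i : ℂ)) = (fun i => (x i : ℂ)) - (fun i => (y i : ℂ)) by
    funext i; simp [PiLp.sub_apply]]
  exact Matrix.mulVec_sub _ _ _

lemma re_map_ofReal_mulVec {m n : Type*} [Fintype n] (B : Matrix m n ℝ) (c : n → ℂ) (i : m) :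
    ((B.map Complex.ofReal).mulVec c i).re = B.mulVec (fun k => (c k).re) i := by
  simp only [Matrix.mulVec, dotProduct, Matrix.map_apply, Complex.re_sum]
  congr 1; funext k
  simp [Complex.re_ofReal_mul]

lemma inner_mulVec_left {p d : ℕ} (F : Matrix (Fin p) (Fin d) ℝ) (h : Fin d → ℝ)
    (v : EuclideanSpace ℝ (Fin p)) :
    ⟪WithLp.toLp 2 (F.mulVec h), v⟫
      = ∑ k, h k * Fᵀ.mulVec (fun i => v i) k := by
  rw [PiLp.inner_apply]
  simp only [RCLike.inner_apply, starRingEnd_apply, star_trivial]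
  simp only [Matrix.mulVec, dotProduct, Matrix.transpose_apply, Finset.sum_mul,
    Finset.mul_sum]
  rw [Finset.sum_comm]
  congr 1; funext k; congr 1; funext i
  ring

end Aux3
section Facts

lemma real_inner_eq_sum {p : ℕ} (x y : EuclideanSpace ℝ (Fin p)) : ⟪x, y⟫ = ∑ i, x i * y i := by
  rw [PiLp.inner_apply]
  simp [RCLike.inner_apply', mul_comm]

variable {p p' d : ℕ} {Ψ : Matrix (Fin p) (Fin p') ℂ} {F : Matrix (Fin p) (Fin d) ℝ}
  {Z : Matrix (Fin d) (Fin p') ℂ}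

lemma fact_psiFac (hfac : Ψ = F.map Complex.ofReal * Z) (x : EuclideanSpace ℝ (Fin p)) :
    psiH Ψ x = Zᴴ.mulVec (fun k => ((Fᵀ.mulVec (fun i => x i) k : ℝ) : ℂ)) := by
  unfold psiH
  rw [hfac, Matrix.conjTranspose_mul]
  have hconjF : (F.map Complex.ofReal)ᴴ = Fᵀ.map Complex.ofReal := by
    ext i j
    simp [Matrix.conjTranspose_apply, Matrix.map_apply, Complex.conj_ofReal]
  rw [hconjF, ← Matrix.mulVec_mulVec, map_ofReal_mulVec]

lemma fact_reFac (hfac : Ψ = F.map Complex.ofReal * Z) (w : Fin p' → ℂ) (i : Fin p) :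
    (Ψ.mulVec w i).re = F.mulVec (fun k => (Z.mulVec w k).re) i := by
  rw [hfac, ← Matrix.mulVec_mulVec, re_map_ofReal_mulVec]

lemma fact_Zdd (hZ : (Matrix.fromCols (Z.map Complex.re) (Z.map Complex.im)).rank = d)
    (y : Fin d → ℝ) (k : Fin d) :
    (Z.mulVec ((Zddag Z).mulVec (fun j => (y j : ℂ))) k).re = y k := by
  have hYu : IsUnit ((Z * Zᴴ).map Complex.re) := isUnit_reZZH Z hZ
  have hY1 : ((Z * Zᴴ).map Complex.re) * ((Z * Zᴴ).map Complex.re)⁻¹ = 1 :=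
    Matrix.mul_nonsing_inv _ ((Matrix.isUnit_iff_isUnit_det _).mp hYu)
  have e1 : Z.mulVec ((Zddag Z).mulVec (fun j => (y j : ℂ)))
      = (Z * Zᴴ).mulVec (fun l => ((((Z * Zᴴ).map Complex.re)⁻¹.mulVec y l : ℝ) : ℂ)) := by
    rw [Matrix.mulVec_mulVec]
    unfold Zddag
    rw [← Matrix.mul_assoc, ← Matrix.mulVec_mulVec, map_ofReal_mulVec]
  rw [e1, re_mulVec_real, Matrix.mulVec_mulVec, hY1, Matrix.one_mulVec]

lemma fact_FtF (hF : F.rank = d) : (Fᵀ * F)⁻¹ * (Fᵀ * F) = 1 := by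
  have hu : IsUnit (Fᵀ * F) := isUnit_of_rank_eq _ (by rw [Matrix.rank_transpose_mul_self, hF])
  exact Matrix.nonsing_inv_mul _ ((Matrix.isUnit_iff_isUnit_det _).mp hu)

lemma fact_FtF' (hF : F.rank = d) : (Fᵀ * F) * (Fᵀ * F)⁻¹ = 1 := by
  have hu : IsUnit (Fᵀ * F) := isUnit_of_rank_eq _ (by rw [Matrix.rank_transpose_mul_self, hF])
  exact Matrix.mul_nonsing_inv _ ((Matrix.isUnit_iff_isUnit_det _).mp hu)

lemma fact_pinv_left (hF : F.rank = d) (ρ : Fin d → ℝ) :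
    (Fpinv F).mulVec (F.mulVec ρ) = ρ := by
  unfold Fpinv
  rw [Matrix.mulVec_mulVec, Matrix.mul_assoc, fact_FtF hF, Matrix.one_mulVec]

lemma fact_Ft_proj (hF : F.rank = d) (gv : Fin p → ℝ) :
    Fᵀ.mulVec (F.mulVec ((Fpinv F).mulVec gv)) = Fᵀ.mulVec gv := by
  unfold Fpinv
  rw [Matrix.mulVec_mulVec, Matrix.mulVec_mulVec, ← Matrix.mul_assoc, fact_FtF' hF,
    Matrix.one_mul]

end Facts
lemma psiH_neg {p p' : ℕ} (Ψ : Matrix (Fin p) (Fin p') ℂ) (x : EuclideanSpace ℝ (Fin p)) :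
    psiH Ψ (-x) = -psiH Ψ x := by
  unfold psiH
  rw [show (fun i => ((-x) i : ℂ)) = -(fun i => (x i : ℂ)) by funext i; simp [PiLp.neg_apply]]
  exact Matrix.mulVec_neg _ _

open Filter Topology
theorem statement_13 {p p' d : ℕ} (hp : 0 < p) (hp' : 0 < p') (hd : 0 < d)
    (C : Set (EuclideanSpace ℝ (Fin p))) (hCne : C.Nonempty) (hCcl : IsClosed C)
    (hCcv : Convex ℝ C)
    (L : EuclideanSpace ℝ (Fin p) → ℝ) (hLcv : ConvexOn ℝ Set.univ L)
    (gradL : EuclideanSpace ℝ (Fin p) → EuclideanSpace ℝ (Fin p))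
    (hLd : ∀ x, HasGradientAt L (gradL x) x)
    (hLb : BddBelow (L '' C))
    (Ψ : Matrix (Fin p) (Fin p') ℂ)
    (hint : (XdSet C L Ψ ∩ interior C).Nonempty)
    (hdim : Module.finrank ℝ
      (Submodule.span ℝ {v : EuclideanSpace ℝ (Fin p) | ∃ w : Fin p' → ℂ, rePsi Ψ w = v}) = d)
    (F : Matrix (Fin p) (Fin d) ℝ) (Z : Matrix (Fin d) (Fin p') ℂ)
    (hfac : Ψ = F.map Complex.ofReal * Z)
    (hF : F.rank = d)
    (hZ : (Matrix.fromCols (Z.map Complex.re) (Z.map Complex.im)).rank = d) :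
    Ubound C L Ψ ≠ ⊤ ∧
    ∀ xd ∈ XdSet C L Ψ ∩ interior C,
      Ubound C L Ψ = sInf (ENNReal.ofReal '' {r : ℝ | ∃ t : Fin p' → ℂ,
        r = cnormInf (t + (Zddag Z).mulVec fun i =>
          (((Fpinv F).mulVec (fun j => gradL xd j) i - (Z.mulVec t i).re : ℝ) : ℂ))}) := by
  classical
  have main : ∀ xd ∈ XdSet C L Ψ ∩ interior C,
      (∀ t : Fin p' → ℂ,
        0 ≤ cnormInf (t + (Zddag Z).mulVec fun i =>
            (((Fpinv F).mulVec (fun j => gradL xd j) i - (Z.mulVec t i).re : ℝ) : ℂ)) ∧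
        (XuSet C L Ψ (cnormInf (t + (Zddag Z).mulVec fun i =>
            (((Fpinv F).mulVec (fun j => gradL xd j) i - (Z.mulVec t i).re : ℝ) : ℂ)))
          ∩ QSet C Ψ).Nonempty) ∧
      (∀ u : ℝ, 0 ≤ u → (XuSet C L Ψ u ∩ QSet C Ψ).Nonempty →
        ∃ t : Fin p' → ℂ, cnormInf (t + (Zddag Z).mulVec fun i =>
            (((Fpinv F).mulVec (fun j => gradL xd j) i - (Z.mulVec t i).re : ℝ) : ℂ)) ≤ u) := by
    rintro xd ⟨hxdQ, hxdI⟩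
    have hxdC : xd ∈ C := hxdQ.1.1
    have hQmin : ∀ χ ∈ C, cnorm1 (psiH Ψ xd) ≤ cnorm1 (psiH Ψ χ) := hxdQ.1.2
    have hLmin : ∀ χ ∈ QSet C Ψ, L xd ≤ L χ := hxdQ.2
    have hmemC : ∀ v : EuclideanSpace ℝ (Fin p),
        ∀ᶠ ε : ℝ in nhds 0, xd + ε • v ∈ interior C := by
      intro v
      have hcont : Continuous (fun ε : ℝ => xd + ε • v) :=
        continuous_const.add (continuous_id.smul continuous_const)
      have ht := hcont.tendsto 0
      rw [show xd + (0:ℝ) • v = xd by simp] at ht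
      exact ht (isOpen_interior.mem_nhds hxdI)
    have hpsixd : psiH Ψ xd = 0 := by
      have hev : ∀ᶠ ε : ℝ in 𝓝[>] (0:ℝ),
          (xd + ε • (-xd) ∈ interior C ∧ ε ∈ Set.Ioo (0:ℝ) 1) := by
        filter_upwards [eventually_nhdsWithin_of_eventually_nhds (hmemC (-xd)),
          Ioo_mem_nhdsGT zero_lt_one] with ε h1 h2
        exact ⟨h1, h2⟩
      obtain ⟨ε, hmem, hε0, hε1⟩ := hev.exists
      have hxe : xd + ε • (-xd) = (1 - ε) • xd := by module
      have hle := hQmin _ (interior_subset hmem)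
      rw [hxe, psiH_smul, cnorm1_scale, abs_of_nonneg (by linarith : (0:ℝ) ≤ 1 - ε)] at hle
      apply eq_zero_of_cnorm1_nonpos
      nlinarith [cnorm1_nonneg (psiH Ψ xd)]
    have hNxd : cnorm1 (psiH Ψ xd) = 0 := by rw [hpsixd, cnorm1_zero]
    have hQchar : ∀ x : EuclideanSpace ℝ (Fin p), x ∈ QSet C Ψ ↔ x ∈ C ∧ psiH Ψ x = 0 := by
      intro x
      constructor
      · intro hx
        refine ⟨hx.1, eq_zero_of_cnorm1_nonpos ?_⟩
        have h := hx.2 xd hxdC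
        rwa [hpsixd, cnorm1_zero] at h
      · rintro ⟨hxC, hx0⟩
        refine ⟨hxC, fun χ _ => ?_⟩
        rw [hx0, cnorm1_zero]
        exact cnorm1_nonneg _
    have hdir0 : ∀ v : EuclideanSpace ℝ (Fin p), psiH Ψ v = 0 → ⟪gradL xd, v⟫ = 0 := by
      intro v hv
      have hloc : IsLocalMin (fun ε : ℝ => L (xd + ε • v)) 0 := by
        have hm : ∀ᶠ ε : ℝ in nhds 0, L (xd + (0:ℝ) • v) ≤ L (xd + ε • v) := by
          filter_upwards [hmemC v] with ε hε
          have hQ : xd + ε • v ∈ QSet C Ψ := by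
            rw [hQchar]
            refine ⟨interior_subset hε, ?_⟩
            rw [psiH_add, hpsixd, psiH_smul, hv]
            funext j; simp
          rw [show xd + (0:ℝ) • v = xd by simp]
          exact hLmin _ hQ
        exact hm
      exact hloc.hasDerivAt_eq_zero (hasDerivAt_line (hLd xd) v)
    set gv : Fin p → ℝ := fun j => gradL xd j with hgv
    set h0 : Fin d → ℝ := (Fpinv F).mulVec gv with hh0
    have hFh : F.mulVec h0 = gv := by
      set v0 : Fin p → ℝ := gv - F.mulVec h0 with hv0
      have hFt : Fᵀ.mulVec v0 = 0 := by
        rw [hv0, Matrix.mulVec_sub, hh0, fact_Ft_proj hF, sub_self]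
      have hpsiv0 : psiH Ψ (WithLp.toLp 2 v0 : EuclideanSpace ℝ (Fin p)) = 0 := by
        rw [fact_psiFac hfac]
        have he : (fun i => (WithLp.toLp 2 v0 : EuclideanSpace ℝ (Fin p)) i) = v0 := rfl
        rw [he, hFt]
        funext k
        simp [Matrix.mulVec]
      have hg0 := hdir0 _ hpsiv0
      rw [real_inner_eq_sum] at hg0
      have e2 : ∑ i, gv i * v0 i = 0 := by
        simp only [hgv]
        exact hg0
      have e3 : ∑ i, F.mulVec h0 i * v0 i = ∑ k, h0 k * Fᵀ.mulVec v0 k := by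
        simp only [Matrix.mulVec, dotProduct, Matrix.transpose_apply, Finset.sum_mul,
          Finset.mul_sum]
        rw [Finset.sum_comm]
        exact Finset.sum_congr rfl fun k _ => Finset.sum_congr rfl fun i _ => by ring
      have hsum : ∑ i, v0 i * v0 i = 0 := by
        have e1 : ∑ i, v0 i * v0 i = ∑ i, gv i * v0 i - ∑ i, F.mulVec h0 i * v0 i := by
          rw [← Finset.sum_sub_distrib]
          refine Finset.sum_congr rfl fun i _ => ?_
          rw [hv0]
          simp only [Pi.sub_apply]
          ring
        rw [e1, e2, e3, hFt]
        simp
      have hz := (Finset.sum_eq_zero_iff_of_nonneg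
        (fun i _ => mul_self_nonneg (v0 i))).mp hsum
      have hv0z : v0 = 0 := funext fun i => mul_self_eq_zero.mp (hz i (Finset.mem_univ i))
      rw [hv0] at hv0z
      exact (sub_eq_zero.mp hv0z).symm
    have key_mem : ∀ u : ℝ, 0 ≤ u →
        (∀ v : EuclideanSpace ℝ (Fin p), ⟪gradL xd, v⟫ ≤ u * cnorm1 (psiH Ψ v)) →
        xd ∈ XuSet C L Ψ u ∩ QSet C Ψ := by
      intro u _ hcond
      refine ⟨⟨hxdC, ?_⟩, (hQchar xd).mpr ⟨hxdC, hpsixd⟩⟩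
      intro χ hχ
      have hgi := gradient_ineq hLcv (hLd xd) χ
      have hc := hcond (xd - χ)
      have hpsub : psiH Ψ (xd - χ) = -psiH Ψ χ := by
        rw [psiH_sub, hpsixd]; simp
      rw [hpsub, cnorm1_neg] at hc
      have hinner : ⟪gradL xd, xd - χ⟫ = -⟪gradL xd, χ - xd⟫ := by
        rw [← inner_neg_right]
        congr 1
        abel
      rw [hinner] at hc
      rw [hNxd]
      linarith
    have key_nec : ∀ u : ℝ, (XuSet C L Ψ u ∩ QSet C Ψ).Nonempty →
        ∀ v : EuclideanSpace ℝ (Fin p), ⟪gradL xd, v⟫ ≤ u * cnorm1 (psiH Ψ v) := by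
      intro u hne v
      obtain ⟨x, hxX, hxQ⟩ := hne
      have hx0 : psiH Ψ x = 0 := ((hQchar x).mp hxQ).2
      have hLx : L xd ≤ L x := hLmin x hxQ
      have hxdXu : ∀ χ ∈ C, L xd ≤ L χ + u * cnorm1 (psiH Ψ χ) := by
        intro χ hχ
        have h := hxX.2 χ hχ
        rw [hx0, cnorm1_zero] at h
        linarith
      have hslope : -(u * cnorm1 (psiH Ψ (-v))) ≤ ⟪gradL xd, -v⟫ := by
        apply ge_of_slope (hasDerivAt_line (hLd xd) (-v))
        filter_upwards [eventually_nhdsWithin_of_eventually_nhds (hmemC (-v)),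
          self_mem_nhdsWithin] with ε hε1 hε2
        have hε0 : (0:ℝ) < ε := hε2
        have hQε := hxdXu _ (interior_subset hε1)
        have hsc : cnorm1 (psiH Ψ (xd + ε • (-v))) = ε * cnorm1 (psiH Ψ (-v)) := by
          rw [psiH_add, hpsixd, zero_add, psiH_smul, cnorm1_scale, abs_of_pos hε0]
        rw [hsc] at hQε
        show -(u * cnorm1 (psiH Ψ (-v)))
            ≤ (L (xd + ε • (-v)) - L (xd + (0:ℝ) • (-v))) / ε
        rw [show xd + (0:ℝ) • (-v) = xd by simp]
        rw [le_div_iff₀ hε0]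
        nlinarith
      have h1 : ⟪gradL xd, -v⟫ = -⟪gradL xd, v⟫ := inner_neg_right _ _
      have h2 : cnorm1 (psiH Ψ (-v)) = cnorm1 (psiH Ψ v) := by
        rw [psiH_neg, cnorm1_neg]
      rw [h1, h2] at hslope
      linarith
    refine ⟨?_, ?_⟩
    · intro t
      set w : Fin p' → ℂ := t + (Zddag Z).mulVec fun i =>
          ((h0 i - (Z.mulVec t i).re : ℝ) : ℂ) with hw
      have hzw : ∀ k, (Z.mulVec w k).re = h0 k := by
        intro k
        have hy := fact_Zdd hZ (fun i => h0 i - (Z.mulVec t i).re) k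
        rw [hw, Matrix.mulVec_add]
        simp only [Pi.add_apply, Complex.add_re]
        rw [hy]
        ring
      have hrw : rePsi Ψ w = gradL xd := by
        ext i
        show (Ψ.mulVec w i).re = gradL xd i
        rw [fact_reFac hfac]
        rw [show (fun k => (Z.mulVec w k).re) = h0 from funext hzw]
        have := congrFun hFh i
        rw [this, hgv]
      have hcond : ∀ v : EuclideanSpace ℝ (Fin p),
          ⟪gradL xd, v⟫ ≤ cnormInf w * cnorm1 (psiH Ψ v) := by
        intro v
        rw [← hrw]
        exact weak_duality hp' Ψ w v
      have hu0 : 0 ≤ cnormInf w := cnormInf_nonneg hp' w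
      exact ⟨hu0, ⟨xd, key_mem _ hu0 hcond⟩⟩
    · intro u hu hne
      obtain ⟨w, hwb, hwre⟩ := sep_exists hp' Ψ (gradL xd) u hu (key_nec u hne)
      have hFρ : F.mulVec (fun k => (Z.mulVec w k).re) = gv := by
        funext i
        rw [← fact_reFac hfac]
        rw [hgv]
        exact congrArg (fun f => f i) hwre
      have hρ : (fun k => (Z.mulVec w k).re) = h0 := by
        rw [hh0, ← hFρ, fact_pinv_left hF]
      have hzero : (fun i => ((h0 i - (Z.mulVec w i).re : ℝ) : ℂ)) = 0 := by
        funext i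
        rw [show (Z.mulVec w i).re = h0 i from congrFun hρ i]
        simp
      refine ⟨w, ?_⟩
      rw [hzero, Matrix.mulVec_zero, add_zero]
      exact cnormInf_le w u hp' hwb
  constructor
  · obtain ⟨xd0, hxd0⟩ := hint
    obtain ⟨hr0, hrne⟩ := (main xd0 hxd0).1 0
    exact ne_top_of_le_ne_top ENNReal.ofReal_ne_top
      (sInf_le (Set.mem_image_of_mem _ ⟨hr0, hrne⟩))
  · intro xd hxd
    obtain ⟨h1, h2⟩ := main xd hxd
    apply le_antisymm
    · apply sInf_le_sInf_of_isCoinitialFor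
      rintro y ⟨r, ⟨t, rfl⟩, rfl⟩
      exact ⟨_, ⟨_, ⟨(h1 t).1, (h1 t).2⟩, rfl⟩, le_rfl⟩
    · apply sInf_le_sInf_of_isCoinitialFor
      rintro y ⟨u, ⟨hu0, hune⟩, rfl⟩
      obtain ⟨t, ht⟩ := h2 u hu0 hune
      exact ⟨_, ⟨_, ⟨t, rfl⟩, rfl⟩, ENNReal.ofReal_le_ofReal ht⟩
end
end

section
/- (Example: real invertible dictionary, 0 in the interior) Let Ψ be a real invertible p × p matrix and let C ⊆ ℝ^p be a nonempty closed convex set with 0 ∈ int C. Then X⋄ = Q = {0} and U = ‖Ψ⁻¹ ∇L(0)‖_∞. -/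
open Matrix
open scoped RealInnerProductSpace ENNReal

noncomputable section

def rnorm1 {n : ℕ} (z : Fin n → ℝ) : ℝ := ∑ j, |z j|

noncomputable def rnormInf {n : ℕ} (z : Fin n → ℝ) : ℝ := ⨆ j, |z j|

/-- `Ψᵀ x` for a real dictionary `Ψ`. -/
def psiT {p q : ℕ} (Ψ : Matrix (Fin p) (Fin q) ℝ) (x : EuclideanSpace ℝ (Fin p)) :
    Fin q → ℝ :=
  Matrix.mulVec Ψᵀ fun i => x i

def XuSetR {p q : ℕ} (C : Set (EuclideanSpace ℝ (Fin p))) (L : EuclideanSpace ℝ (Fin p) → ℝ)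
    (Ψ : Matrix (Fin p) (Fin q) ℝ) (u : ℝ) : Set (EuclideanSpace ℝ (Fin p)) :=
  {x ∈ C | ∀ χ ∈ C, L x + u * rnorm1 (psiT Ψ x) ≤ L χ + u * rnorm1 (psiT Ψ χ)}

def QSetR {p q : ℕ} (C : Set (EuclideanSpace ℝ (Fin p))) (Ψ : Matrix (Fin p) (Fin q) ℝ) :
    Set (EuclideanSpace ℝ (Fin p)) :=
  {x ∈ C | ∀ χ ∈ C, rnorm1 (psiT Ψ x) ≤ rnorm1 (psiT Ψ χ)}

def XdSetR {p q : ℕ} (C : Set (EuclideanSpace ℝ (Fin p))) (L : EuclideanSpace ℝ (Fin p) → ℝ)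
    (Ψ : Matrix (Fin p) (Fin q) ℝ) : Set (EuclideanSpace ℝ (Fin p)) :=
  {x ∈ QSetR C Ψ | ∀ χ ∈ QSetR C Ψ, L x ≤ L χ}

def UboundR {p q : ℕ} (C : Set (EuclideanSpace ℝ (Fin p))) (L : EuclideanSpace ℝ (Fin p) → ℝ)
    (Ψ : Matrix (Fin p) (Fin q) ℝ) : ℝ≥0∞ :=
  sInf (ENNReal.ofReal '' {u : ℝ | 0 ≤ u ∧ (XuSetR C L Ψ u ∩ QSetR C Ψ).Nonempty})

/- Auxiliary lemmas -/

lemma rnorm1_nonneg {n : ℕ} (z : Fin n → ℝ) : 0 ≤ rnorm1 z :=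
  Finset.sum_nonneg fun j _ => abs_nonneg _

lemma abs_le_rnormInf {n : ℕ} (z : Fin n → ℝ) (j : Fin n) : |z j| ≤ rnormInf z :=
  le_ciSup (f := fun j => |z j|) (Set.Finite.bddAbove (Set.finite_range _)) j

lemma psiT_zero {p q : ℕ} (Ψ : Matrix (Fin p) (Fin q) ℝ) : psiT Ψ 0 = 0 := by
  show Ψᵀ.mulVec (fun i => (0 : EuclideanSpace ℝ (Fin p)) i) = 0
  show Ψᵀ.mulVec (0 : Fin p → ℝ) = 0
  exact Matrix.mulVec_zero _

lemma rnorm1_psiT_zero {p q : ℕ} (Ψ : Matrix (Fin p) (Fin q) ℝ) :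
    rnorm1 (psiT Ψ 0) = 0 := by
  simp [psiT_zero, rnorm1]

lemma psiT_smul {p q : ℕ} (Ψ : Matrix (Fin p) (Fin q) ℝ) (t : ℝ)
    (x : EuclideanSpace ℝ (Fin p)) : psiT Ψ (t • x) = t • psiT Ψ x := by
  show Ψᵀ.mulVec (fun i => (t • x : EuclideanSpace ℝ (Fin p)) i) = _
  show Ψᵀ.mulVec (t • fun i => x i) = _
  rw [Matrix.mulVec_smul]
  rfl

lemma rnorm1_smul {n : ℕ} (t : ℝ) (z : Fin n → ℝ) :
    rnorm1 (t • z) = |t| * rnorm1 z := by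
  simp [rnorm1, abs_mul, Finset.mul_sum]

lemma neg_holder {n : ℕ} (v w : Fin n → ℝ) :
    -(rnormInf v * rnorm1 w) ≤ v ⬝ᵥ w := by
  have h : ∀ j, -(rnormInf v * |w j|) ≤ v j * w j := by
    intro j
    have h1 : |v j * w j| ≤ rnormInf v * |w j| := by
      rw [abs_mul]
      exact mul_le_mul_of_nonneg_right (abs_le_rnormInf v j) (abs_nonneg _)
    linarith [neg_abs_le (v j * w j)]
  calc -(rnormInf v * rnorm1 w) = ∑ j, -(rnormInf v * |w j|) := by
        simp [rnorm1, Finset.mul_sum]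
    _ ≤ ∑ j, v j * w j := Finset.sum_le_sum fun j _ => h j
    _ = v ⬝ᵥ w := rfl

lemma inner_eq_dot {p : ℕ} (g χ : EuclideanSpace ℝ (Fin p)) :
    ⟪g, χ⟫ = (fun i => g i) ⬝ᵥ (fun i => χ i) := by
  simp [PiLp.inner_apply, dotProduct, RCLike.inner_apply, mul_comm]

lemma dot_inv_trans {p : ℕ} (Ψ : Matrix (Fin p) (Fin p) ℝ) (hΨ : IsUnit Ψ.det)
    (g x : Fin p → ℝ) : (Ψ⁻¹.mulVec g) ⬝ᵥ (Ψᵀ.mulVec x) = g ⬝ᵥ x := by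
  rw [Matrix.dotProduct_mulVec, Matrix.vecMul_transpose, Matrix.mulVec_mulVec,
    Matrix.mul_nonsing_inv _ hΨ, Matrix.one_mulVec]

/-- convex differentiable: gradient inequality at 0 -/
lemma grad_ineq {p : ℕ} {L : EuclideanSpace ℝ (Fin p) → ℝ}
    (hLcv : ConvexOn ℝ Set.univ L) {g : EuclideanSpace ℝ (Fin p)}
    (hg : HasGradientAt L g 0) (χ : EuclideanSpace ℝ (Fin p)) :
    L 0 + ⟪g, χ⟫ ≤ L χ := by
  set φ : ℝ → ℝ := fun t => L (t • χ) with hφ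
  have hφc : ConvexOn ℝ Set.univ φ := by
    have := hLcv.comp_affineMap (LinearMap.toSpanSingleton ℝ _ χ).toAffineMap
    exact this
  have hd : HasDerivAt φ ⟪g, χ⟫ 0 := by
    have h1 : HasDerivAt (fun t : ℝ => t • χ) χ 0 := by
      simpa using (hasDerivAt_id (0:ℝ)).smul_const χ
    have h2 : HasFDerivAt L ((InnerProductSpace.toDual ℝ _) g) ((0:ℝ) • χ) := by
      simpa using hasGradientAt_iff_hasFDerivAt.1 hg
    exact (h2.comp_hasDerivAt 0 h1)
  have := hφc.le_slope_of_hasDerivAt (Set.mem_univ 0) (Set.mem_univ 1) zero_lt_one hd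
  have hs : slope φ 0 1 = L χ - L 0 := by
    simp [slope, hφ]
  rw [hs] at this
  linarith

theorem statement_15 {p : ℕ} (hp : 0 < p)
    (C : Set (EuclideanSpace ℝ (Fin p))) (hCne : C.Nonempty) (hCcl : IsClosed C)
    (hCcv : Convex ℝ C) (h0 : (0 : EuclideanSpace ℝ (Fin p)) ∈ interior C)
    (Ψ : Matrix (Fin p) (Fin p) ℝ) (hΨ : IsUnit Ψ.det)
    (L : EuclideanSpace ℝ (Fin p) → ℝ) (hLcv : ConvexOn ℝ Set.univ L)
    (gradL : EuclideanSpace ℝ (Fin p) → EuclideanSpace ℝ (Fin p))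
    (hLd : ∀ x, HasGradientAt L (gradL x) x)
    (hLb : BddBelow (L '' C)) :
    QSetR C Ψ = {0} ∧
    XdSetR C L Ψ = {0} ∧
    UboundR C L Ψ = ENNReal.ofReal (rnormInf (Ψ⁻¹.mulVec fun i => gradL 0 i)) := by
  haveI : Nonempty (Fin p) := ⟨⟨0, hp⟩⟩
  have h0C : (0 : EuclideanSpace ℝ (Fin p)) ∈ C := interior_subset h0
  set g : EuclideanSpace ℝ (Fin p) := gradL 0 with hgdef
  set w : Fin p → ℝ := Ψ⁻¹.mulVec (fun i => g i) with hwdef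
  set us : ℝ := rnormInf w with husdef
  -- ustar nonneg
  have hus0 : 0 ≤ us := le_trans (abs_nonneg _) (abs_le_rnormInf w (Classical.arbitrary _))
  -- Q = {0}
  have hQ : QSetR C Ψ = {0} := by
    ext x
    constructor
    · rintro ⟨hxC, hxmin⟩
      have h1 : rnorm1 (psiT Ψ x) ≤ 0 := by
        simpa [rnorm1_psiT_zero] using hxmin 0 h0C
      have h2 : rnorm1 (psiT Ψ x) = 0 := le_antisymm h1 (rnorm1_nonneg _)
      have h3 : ∀ j, psiT Ψ x j = 0 := by
        intro j
        have := (Finset.sum_eq_zero_iff_of_nonneg (fun j _ => abs_nonneg (psiT Ψ x j))).1 h2 j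
          (Finset.mem_univ j)
        exact abs_eq_zero.1 this
      have hinj : Function.Injective (Ψᵀ.mulVec : (Fin p → ℝ) → _) :=
        Matrix.mulVec_injective_iff_isUnit.2
          (by simpa [Matrix.isUnit_iff_isUnit_det, Matrix.det_transpose] using hΨ)
      have h4 : (fun i => x i) = (0 : Fin p → ℝ) := by
        apply hinj
        · funext j
          simpa [psiT] using h3 j
      have : x = 0 := by
        ext i; exact congrFun h4 i
      simpa using this
    · rintro rfl
      exact ⟨h0C, fun χ _ => by
        simpa [rnorm1_psiT_zero] using rnorm1_nonneg (psiT Ψ χ)⟩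
  -- Xd = {0}
  have hXd : XdSetR C L Ψ = {0} := by
    ext x
    constructor
    · rintro ⟨hxQ, _⟩
      rw [hQ] at hxQ; exact hxQ
    · rintro rfl
      refine ⟨by rw [hQ]; rfl, ?_⟩
      intro χ hχ
      rw [hQ] at hχ
      simp only [Set.mem_singleton_iff] at hχ
      rw [hχ]
  refine ⟨hQ, hXd, ?_⟩
  -- the set S
  set S : Set ℝ := {u : ℝ | 0 ≤ u ∧ (XuSetR C L Ψ u ∩ QSetR C Ψ).Nonempty} with hSdef
  -- 0 ∈ Q
  have h0Q : (0 : EuclideanSpace ℝ (Fin p)) ∈ QSetR C Ψ := by rw [hQ]; rfl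
  -- membership of u ≥ us in S (in particular us)
  have hmem : ∀ u : ℝ, us ≤ u → u ∈ S := by
    intro u hu
    refine ⟨le_trans hus0 hu, ⟨0, ⟨?_, h0Q⟩⟩⟩
    refine ⟨h0C, ?_⟩
    intro χ hχ
    have hgrad := grad_ineq hLcv (hLd 0) χ
    have hdot : ⟪g, χ⟫ = w ⬝ᵥ (psiT Ψ χ) := by
      rw [inner_eq_dot, hwdef, psiT, dot_inv_trans Ψ hΨ]
    have hh : -(us * rnorm1 (psiT Ψ χ)) ≤ ⟪g, χ⟫ := by
      rw [hdot]; exact neg_holder w (psiT Ψ χ)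
    have hr : 0 ≤ rnorm1 (psiT Ψ χ) := rnorm1_nonneg _
    have : us * rnorm1 (psiT Ψ χ) ≤ u * rnorm1 (psiT Ψ χ) :=
      mul_le_mul_of_nonneg_right hu hr
    rw [rnorm1_psiT_zero]
    linarith
  -- every element of S is ≥ us
  have hlow : ∀ u ∈ S, us ≤ u := by
    rintro u ⟨hu0, x, hxXu, hxQ⟩
    by_contra hlt
    push_neg at hlt
    have hx0 : x = 0 := by rw [hQ] at hxQ; exact hxQ
    subst hx0
    have h0Xu := hxXu.2
    -- pick j achieving the sup
    obtain ⟨j, hj⟩ := Finite.exists_max (fun j => |w j|)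
    have hjus : |w j| = us := by
      refine le_antisymm (abs_le_rnormInf w j) (ciSup_le hj)
    have huspos : 0 < us := lt_of_le_of_lt hu0 hlt
    -- direction
    set z : Fin p → ℝ := fun i => if i = j then -(w j) else 0 with hzdef
    have hwz : w ⬝ᵥ z = -(us * us) := by
      have : w ⬝ᵥ z = w j * (-(w j)) := by
        simp [dotProduct, hzdef, Finset.sum_ite_eq', mul_comm]
      rw [this]
      have : w j * w j = |w j| * |w j| := (abs_mul_abs_self (w j)).symm
      rw [mul_neg, this, hjus]
    have hz1 : rnorm1 z = us := by
      simp only [rnorm1, hzdef]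
      rw [Finset.sum_eq_single j]
      · simpa using hjus
      · intro i _ hi; simp [hi]
      · intro h; exact absurd (Finset.mem_univ j) h
    set d : EuclideanSpace ℝ (Fin p) := (WithLp.equiv 2 _).symm ((Ψᵀ)⁻¹.mulVec z) with hddef
    have hψd : psiT Ψ d = z := by
      have hΨT : IsUnit Ψᵀ.det := by simpa [Matrix.det_transpose] using hΨ
      have : (fun i => d i) = (Ψᵀ)⁻¹.mulVec z := rfl
      rw [psiT, this, Matrix.mulVec_mulVec, Matrix.mul_nonsing_inv _ hΨT, Matrix.one_mulVec]
    -- derivative of φ t = L (t • d)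
    have hgd : ⟪g, d⟫ = -(us * us) := by
      rw [inner_eq_dot]
      have : (fun i => g i) ⬝ᵥ (fun i => d i) =
          (Ψ⁻¹.mulVec fun i => g i) ⬝ᵥ (Ψᵀ.mulVec fun i => d i) :=
        (dot_inv_trans Ψ hΨ _ _).symm
      rw [this]
      have h2 : Ψᵀ.mulVec (fun i => d i) = z := hψd
      rw [h2, ← hwdef, hwz]
    set φ : ℝ → ℝ := fun t => L (t • d) with hφdef
    have hd1 : HasDerivAt (fun t : ℝ => t • d) d 0 := by
      simpa using (hasDerivAt_id (0:ℝ)).smul_const d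
    have hd2 : HasFDerivAt L ((InnerProductSpace.toDual ℝ _) g) ((0:ℝ) • d) := by
      simpa using hasGradientAt_iff_hasFDerivAt.1 (hLd 0)
    have hφd : HasDerivAt φ ⟪g, d⟫ 0 := by
      exact hd2.comp_hasDerivAt 0 hd1
    -- strict negativity of directional bound
    have hkey : ⟪g, d⟫ + u * us < 0 := by
      rw [hgd]
      nlinarith
    -- slope tends to ⟪g,d⟫ on right nhds
    have hslope : Filter.Tendsto (slope φ 0) (nhdsWithin 0 (Set.Ioi 0)) (nhds ⟪g, d⟫) := by
      have := hasDerivAt_iff_tendsto_slope.1 hφd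
      exact this.mono_left (nhdsWithin_mono 0 (fun t ht => ne_of_gt ht))
    have hev1 : ∀ᶠ t in nhdsWithin 0 (Set.Ioi 0), slope φ 0 t < -(u * us) := by
      apply hslope.eventually_lt_const
      linarith
    have hev2 : ∀ᶠ t in nhdsWithin (0:ℝ) (Set.Ioi 0), t • d ∈ C := by
      have hcont : Filter.Tendsto (fun t : ℝ => t • d) (nhdsWithin 0 (Set.Ioi 0)) (nhds 0) := by
        have : Filter.Tendsto (fun t : ℝ => t • d) (nhds 0) (nhds ((0:ℝ) • d)) :=
          (continuous_id.smul continuous_const).tendsto 0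
        simpa using this.mono_left nhdsWithin_le_nhds
      exact hcont (mem_interior_iff_mem_nhds.1 h0)
    have hev3 : ∀ᶠ t in nhdsWithin 0 (Set.Ioi 0), t ∈ Set.Ioi (0:ℝ) :=
      self_mem_nhdsWithin
    obtain ⟨t, ht1, ht2, ht3⟩ := (hev1.and (hev2.and hev3)).exists
    have htpos : (0:ℝ) < t := ht3
    -- derive contradiction with 0 ∈ X_u
    have hXineq := h0Xu (t • d) ht2
    have hφt : slope φ 0 t = (L (t • d) - L 0) / t := by
      simp [slope, hφdef, div_eq_inv_mul]
    rw [hφt] at ht1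
    have hL : L (t • d) - L 0 < -(u * us) * t := by
      have := (div_lt_iff₀ htpos).1 ht1
      linarith [this]
    have hr : rnorm1 (psiT Ψ (t • d)) = t * us := by
      rw [psiT_smul, rnorm1_smul, hψd, hz1, abs_of_pos htpos]
    rw [rnorm1_psiT_zero, hr] at hXineq
    nlinarith
  -- conclude on sInf
  show sInf _ = ENNReal.ofReal us
  apply le_antisymm
  · exact sInf_le ⟨us, hmem us le_rfl, rfl⟩
  · apply le_sInf
    rintro b ⟨u, huS, rfl⟩
    exact ENNReal.ofReal_le_ofReal (hlow u huS)
end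
end
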